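/- Let F be a finite field with char F ≠ 2 and |F| = q. Then the number of 3×3 matrices over F with zero permanent is |P_3(F)| = q⁹ − (q³−1)(q³−q)(q³−q²) − q²(q−1)⁵. -/

import Mathlib

open Finset Equiv

namespace PermCount

variable {F : Type} [Field F] [Fintype F] [DecidableEq F]

theorem permanent_fin_three (A : Matrix (Fin 3) (Fin 3) F) :
    A.permanent = A 0 0 * A 1 1 * A 2 2 + A 1 0 * A 0 1 * A 2 2 + A 2 0 * A 1 1 * A 0 2
      + A 0 0 * A 2 1 * A 1 2 + A 1 0 * A 2 1 * A 0 2 + A 2 0 * A 0 1 * A 1 2 := by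
  have huniv : (univ : Finset (Perm (Fin 3))) =
      {1, Equiv.swap 0 1, Equiv.swap 0 2, Equiv.swap 1 2,
        Equiv.swap 0 1 * Equiv.swap 1 2, Equiv.swap 0 2 * Equiv.swap 1 2} := by decide
  rw [Matrix.permanent, huniv]
  rw [Finset.sum_insert (by decide), Finset.sum_insert (by decide),
    Finset.sum_insert (by decide), Finset.sum_insert (by decide),
    Finset.sum_insert (by decide), Finset.sum_singleton]
  simp only [Fin.prod_univ_three]
  norm_num [Equiv.swap_apply_def, Perm.mul_apply, Fin.ext_iff]
  ring

lemma card_graph1 (g h : F → F) :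
    ((univ : Finset (F × F × F)).filter fun c => c.2.1 = g c.1 ∧ c.2.2 = h c.1).card
      = Fintype.card F := by
  have himg : ((univ : Finset (F × F × F)).filter fun c => c.2.1 = g c.1 ∧ c.2.2 = h c.1)
      = univ.image (fun x : F => (x, g x, h x)) := by
    ext ⟨x, y, z⟩
    simp only [mem_filter, mem_univ, true_and, mem_image, Prod.mk.injEq]
    constructor
    · rintro ⟨h1, h2⟩; exact ⟨x, rfl, h1.symm, h2.symm⟩
    · rintro ⟨a, rfl, h1, h2⟩; exact ⟨h1.symm, h2.symm⟩
  rw [himg, Finset.card_image_of_injective _ (fun a b hab => congrArg Prod.fst hab),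
    Finset.card_univ]

lemma card_graph2 (g h : F → F) :
    ((univ : Finset (F × F × F)).filter fun c => c.1 = g c.2.1 ∧ c.2.2 = h c.2.1).card
      = Fintype.card F := by
  have himg : ((univ : Finset (F × F × F)).filter fun c => c.1 = g c.2.1 ∧ c.2.2 = h c.2.1)
      = univ.image (fun y : F => (g y, y, h y)) := by
    ext ⟨x, y, z⟩
    simp only [mem_filter, mem_univ, true_and, mem_image, Prod.mk.injEq]
    constructor
    · rintro ⟨h1, h2⟩; exact ⟨y, h1.symm, rfl, h2.symm⟩
    · rintro ⟨a, h1, rfl, h2⟩; exact ⟨h1.symm, h2.symm⟩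
  rw [himg, Finset.card_image_of_injective _
    (fun a b hab => congrArg (fun p : F × F × F => p.2.1) hab), Finset.card_univ]

lemma card_graph3 (g h : F → F) :
    ((univ : Finset (F × F × F)).filter fun c => c.1 = g c.2.2 ∧ c.2.1 = h c.2.2).card
      = Fintype.card F := by
  have himg : ((univ : Finset (F × F × F)).filter fun c => c.1 = g c.2.2 ∧ c.2.1 = h c.2.2)
      = univ.image (fun z : F => (g z, h z, z)) := by
    ext ⟨x, y, z⟩
    simp only [mem_filter, mem_univ, true_and, mem_image, Prod.mk.injEq]
    constructor
    · rintro ⟨h1, h2⟩; exact ⟨z, h1.symm, h2.symm, rfl⟩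
    · rintro ⟨a, h1, h2, rfl⟩; exact ⟨h1.symm, h2.symm⟩
  rw [himg, Finset.card_image_of_injective _
    (fun a b hab => congrArg (fun p : F × F × F => p.2.2) hab), Finset.card_univ]

lemma card_point :
    ((univ : Finset (F × F × F)).filter fun c => c.1 = 0 ∧ c.2.1 = 0 ∧ c.2.2 = 0).card = 1 := by
  have himg : ((univ : Finset (F × F × F)).filter fun c => c.1 = 0 ∧ c.2.1 = 0 ∧ c.2.2 = 0)
      = {((0 : F), (0 : F), (0 : F))} := by
    ext ⟨x, y, z⟩
    simp [Prod.ext_iff]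
  rw [himg, Finset.card_singleton]

lemma card_plane1 (g : F → F → F) :
    ((univ : Finset (F × F × F)).filter fun c => c.1 = g c.2.1 c.2.2).card
      = Fintype.card F ^ 2 := by
  have himg : ((univ : Finset (F × F × F)).filter fun c => c.1 = g c.2.1 c.2.2)
      = univ.image (fun p : F × F => (g p.1 p.2, p.1, p.2)) := by
    ext ⟨x, y, z⟩
    simp only [mem_filter, mem_univ, true_and, mem_image, Prod.mk.injEq]
    constructor
    · rintro h1; exact ⟨(y, z), h1.symm, rfl, rfl⟩
    · rintro ⟨⟨a, b⟩, h1, rfl, rfl⟩; exact h1.symm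
  rw [himg, Finset.card_image_of_injective, Finset.card_univ, Fintype.card_prod, sq]
  intro a b hab
  exact Prod.ext (congrArg (fun p : F × F × F => p.2.1) hab)
    (congrArg (fun p : F × F × F => p.2.2) hab)

lemma card_plane2 (g : F → F → F) :
    ((univ : Finset (F × F × F)).filter fun c => c.2.1 = g c.1 c.2.2).card
      = Fintype.card F ^ 2 := by
  have himg : ((univ : Finset (F × F × F)).filter fun c => c.2.1 = g c.1 c.2.2)
      = univ.image (fun p : F × F => (p.1, g p.1 p.2, p.2)) := by
    ext ⟨x, y, z⟩
    simp only [mem_filter, mem_univ, true_and, mem_image, Prod.mk.injEq]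
    constructor
    · rintro h1; exact ⟨(x, z), rfl, h1.symm, rfl⟩
    · rintro ⟨⟨a, b⟩, rfl, h1, rfl⟩; exact h1.symm
  rw [himg, Finset.card_image_of_injective, Finset.card_univ, Fintype.card_prod, sq]
  intro a b hab
  exact Prod.ext (congrArg (fun p : F × F × F => p.1) hab)
    (congrArg (fun p : F × F × F => p.2.2) hab)

lemma card_plane3 (g : F → F → F) :
    ((univ : Finset (F × F × F)).filter fun c => c.2.2 = g c.1 c.2.1).card
      = Fintype.card F ^ 2 := by
  have himg : ((univ : Finset (F × F × F)).filter fun c => c.2.2 = g c.1 c.2.1)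
      = univ.image (fun p : F × F => (p.1, p.2, g p.1 p.2)) := by
    ext ⟨x, y, z⟩
    simp only [mem_filter, mem_univ, true_and, mem_image, Prod.mk.injEq]
    constructor
    · rintro h1; exact ⟨(x, y), rfl, rfl, h1.symm⟩
    · rintro ⟨⟨a, b⟩, rfl, rfl, h1⟩; exact h1.symm
  rw [himg, Finset.card_image_of_injective, Finset.card_univ, Fintype.card_prod, sq]
  intro a b hab
  exact Prod.ext (congrArg (fun p : F × F × F => p.1) hab)
    (congrArg (fun p : F × F × F => p.2.1) hab)

lemma card_triple : Fintype.card (F × F × F) = Fintype.card F ^ 3 := by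
  simp only [Fintype.card_prod]; ring

lemma count_linear (v1 v2 v3 : F) :
    ((univ : Finset (F × F × F)).filter
        fun a => v1 * a.1 + v2 * a.2.1 + v3 * a.2.2 = 0).card
      = if v1 = 0 ∧ v2 = 0 ∧ v3 = 0 then Fintype.card F ^ 3 else Fintype.card F ^ 2 := by
  split_ifs with h
  · obtain ⟨rfl, rfl, rfl⟩ := h
    simp only [zero_mul, add_zero, zero_add]
    rw [Finset.filter_true, Finset.card_univ, card_triple]
  · by_cases h1 : v1 = 0
    · by_cases hv2 : v2 = 0
      · have h3 : v3 ≠ 0 := by tauto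
        subst h1; subst hv2
        rw [Finset.filter_congr
          (q := fun a : F × F × F => a.2.2 = -(0 * a.1 + 0 * a.2.1) / v3)
          (fun a _ => by
            simp only [eq_div_iff h3]
            constructor <;> intro H <;> linear_combination H)]
        exact card_plane3 (fun x y => -(0 * x + 0 * y) / v3)
      · subst h1
        rw [Finset.filter_congr
          (q := fun a : F × F × F => a.2.1 = -(0 * a.1 + v3 * a.2.2) / v2)
          (fun a _ => by
            simp only [eq_div_iff hv2]
            constructor <;> intro H <;> linear_combination H)]
        exact card_plane2 (fun x z => -(0 * x + v3 * z) / v2)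
    · rw [Finset.filter_congr
        (q := fun a : F × F × F => a.1 = -(v2 * a.2.1 + v3 * a.2.2) / v1)
        (fun a _ => by
          simp only [eq_div_iff h1]
          constructor <;> intro H <;> linear_combination H)]
      exact card_plane1 (fun y z => -(v2 * y + v3 * z) / v1)

lemma count_K (h2 : (2 : F) ≠ 0) (p r s : F) :
    ((univ : Finset (F × F × F)).filter fun c =>
        r * c.2.2 + s * c.2.1 = 0 ∧ p * c.2.2 + s * c.1 = 0 ∧ p * c.2.1 + r * c.1 = 0).card
      = if p = 0 ∧ r = 0 ∧ s = 0 then Fintype.card F ^ 3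
        else if p ≠ 0 ∧ r ≠ 0 ∧ s ≠ 0 then 1 else Fintype.card F := by
  by_cases hp : p = 0 <;> by_cases hr : r = 0 <;> by_cases hs : s = 0
  · -- all zero
    subst hp; subst hr; subst hs
    rw [if_pos ⟨rfl, rfl, rfl⟩]
    simp only [zero_mul, add_zero, zero_add]
    rw [Finset.filter_true_of_mem (fun _ _ => by norm_num), Finset.card_univ, card_triple]
  · -- p = 0, r = 0, s ≠ 0
    subst hp; subst hr
    rw [if_neg (by tauto), if_neg (by tauto)]
    rw [Finset.filter_congr
      (q := fun c : F × F × F => c.1 = (0 : F) ∧ c.2.1 = (0 : F))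
      (fun c _ => by
        simp only [zero_mul, add_zero, zero_add]
        constructor
        · rintro ⟨e1, e2, -⟩
          exact ⟨(mul_eq_zero.mp e2).resolve_left hs, (mul_eq_zero.mp e1).resolve_left hs⟩
        · rintro ⟨hx, hy⟩; rw [hx, hy]; norm_num)]
    exact card_graph3 (fun _ => 0) (fun _ => 0)
  · -- p = 0, r ≠ 0, s = 0
    subst hp; subst hs
    rw [if_neg (by tauto), if_neg (by tauto)]
    rw [Finset.filter_congr
      (q := fun c : F × F × F => c.1 = (0 : F) ∧ c.2.2 = (0 : F))
      (fun c _ => by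
        simp only [zero_mul, add_zero, zero_add]
        constructor
        · rintro ⟨e1, -, e3⟩
          exact ⟨(mul_eq_zero.mp e3).resolve_left hr, (mul_eq_zero.mp e1).resolve_left hr⟩
        · rintro ⟨hx, hz⟩; rw [hx, hz]; norm_num)]
    exact card_graph2 (fun _ => 0) (fun _ => 0)
  · -- p = 0, r ≠ 0, s ≠ 0
    subst hp
    rw [if_neg (by tauto), if_neg (by tauto)]
    rw [Finset.filter_congr
      (q := fun c : F × F × F => c.1 = (0 : F) ∧ c.2.2 = -(s * c.2.1) / r)
      (fun c _ => by
        simp only [zero_mul, add_zero, zero_add]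
        constructor
        · rintro ⟨e1, e2, -⟩
          refine ⟨(mul_eq_zero.mp e2).resolve_left hs, ?_⟩
          rw [eq_div_iff hr]
          linear_combination e1
        · rintro ⟨hx, hz⟩
          refine ⟨?_, ?_, ?_⟩
          · rw [hz]; field_simp; try ring
          · rw [hx, mul_zero]
          · rw [hx, mul_zero])]
    exact card_graph2 (fun _ => 0) (fun y => -(s * y) / r)
  · -- p ≠ 0, r = 0, s = 0
    subst hr; subst hs
    rw [if_neg (by tauto), if_neg (by tauto)]
    rw [Finset.filter_congr
      (q := fun c : F × F × F => c.2.1 = (0 : F) ∧ c.2.2 = (0 : F))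
      (fun c _ => by
        simp only [zero_mul, add_zero, zero_add]
        constructor
        · rintro ⟨-, e2, e3⟩
          exact ⟨(mul_eq_zero.mp e3).resolve_left hp, (mul_eq_zero.mp e2).resolve_left hp⟩
        · rintro ⟨hy, hz⟩; rw [hy, hz]; norm_num)]
    exact card_graph1 (fun _ => 0) (fun _ => 0)
  · -- p ≠ 0, r = 0, s ≠ 0
    subst hr
    rw [if_neg (by tauto), if_neg (by tauto)]
    rw [Finset.filter_congr
      (q := fun c : F × F × F => c.2.1 = (0 : F) ∧ c.2.2 = -(s * c.1) / p)
      (fun c _ => by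
        simp only [zero_mul, add_zero, zero_add]
        constructor
        · rintro ⟨e1, e2, e3⟩
          refine ⟨(mul_eq_zero.mp e3).resolve_left hp, ?_⟩
          rw [eq_div_iff hp]
          linear_combination e2
        · rintro ⟨hy, hz⟩
          refine ⟨?_, ?_, ?_⟩
          · rw [hy, mul_zero]
          · rw [hz]; field_simp; try ring
          · rw [hy, mul_zero])]
    exact card_graph1 (fun _ => 0) (fun x => -(s * x) / p)
  · -- p ≠ 0, r ≠ 0, s = 0
    subst hs
    rw [if_neg (by tauto), if_neg (by tauto)]
    rw [Finset.filter_congr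
      (q := fun c : F × F × F => c.2.1 = -(r * c.1) / p ∧ c.2.2 = (0 : F))
      (fun c _ => by
        simp only [zero_mul, add_zero, zero_add]
        constructor
        · rintro ⟨e1, e2, e3⟩
          refine ⟨?_, (mul_eq_zero.mp e2).resolve_left hp⟩
          rw [eq_div_iff hp]
          linear_combination e3
        · rintro ⟨hy, hz⟩
          refine ⟨?_, ?_, ?_⟩
          · rw [hz, mul_zero]
          · rw [hz, mul_zero]
          · rw [hy]; field_simp; try ring)]
    exact card_graph1 (fun x => -(r * x) / p) (fun _ => 0)
  · -- all nonzero
    rw [if_neg (by tauto), if_pos ⟨hp, hr, hs⟩]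
    rw [Finset.filter_congr
      (q := fun c : F × F × F => c.1 = 0 ∧ c.2.1 = 0 ∧ c.2.2 = 0)
      (fun c _ => by
        constructor
        · rintro ⟨e1, e2, e3⟩
          have h4 : (2 * p * s) * c.2.1 = 0 := by linear_combination s * e3 + p * e1 - r * e2
          have hy : c.2.1 = 0 :=
            (mul_eq_zero.mp h4).resolve_left (mul_ne_zero (mul_ne_zero h2 hp) hs)
          rw [hy, mul_zero, zero_add] at e3
          have hx : c.1 = 0 := (mul_eq_zero.mp e3).resolve_left hr
          rw [hx, mul_zero, add_zero] at e2
          have hz : c.2.2 = 0 := (mul_eq_zero.mp e2).resolve_left hp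
          exact ⟨hx, hy, hz⟩
        · rintro ⟨hx, hy, hz⟩
          rw [hx, hy, hz]
          norm_num)]
    exact card_point

lemma card_nonzero_triple :
    ((univ : Finset (F × F × F)).filter fun b => b.1 ≠ 0 ∧ b.2.1 ≠ 0 ∧ b.2.2 ≠ 0).card
      = (Fintype.card F - 1) * ((Fintype.card F - 1) * (Fintype.card F - 1)) := by
  have hne : ((univ : Finset F).filter fun x => x ≠ 0).card = Fintype.card F - 1 := by
    rw [Finset.filter_ne', Finset.card_erase_of_mem (mem_univ _), Finset.card_univ]
  rw [← Finset.univ_product_univ,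
    Finset.filter_product (fun x : F => x ≠ 0) (fun y : F × F => y.1 ≠ 0 ∧ y.2 ≠ 0),
    Finset.card_product, ← Finset.univ_product_univ,
    Finset.filter_product (fun x : F => x ≠ 0) (fun y : F => y ≠ 0),
    Finset.card_product, hne]


def rowsEquiv (F : Type) : (((F × F × F) × (F × F × F)) × (F × F × F)) ≃ Matrix (Fin 3) (Fin 3) F where
  toFun t := !![t.2.1, t.2.2.1, t.2.2.2;
                t.1.1.1, t.1.1.2.1, t.1.1.2.2;
                t.1.2.1, t.1.2.2.1, t.1.2.2.2]
  invFun A := (((A 1 0, A 1 1, A 1 2), (A 2 0, A 2 1, A 2 2)), (A 0 0, A 0 1, A 0 2))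
  left_inv t := rfl
  right_inv A := by
    ext i j
    fin_cases i <;> fin_cases j <;> rfl

lemma perm_rowsEquiv (t : ((F × F × F) × (F × F × F)) × (F × F × F)) :
    (rowsEquiv F t).permanent =
      (t.1.1.2.1 * t.1.2.2.2 + t.1.1.2.2 * t.1.2.2.1) * t.2.1
      + (t.1.1.1 * t.1.2.2.2 + t.1.1.2.2 * t.1.2.1) * t.2.2.1
      + (t.1.1.1 * t.1.2.2.1 + t.1.1.2.1 * t.1.2.1) * t.2.2.2 := by
  change (!![t.2.1, t.2.2.1, t.2.2.2; t.1.1.1, t.1.1.2.1, t.1.1.2.2;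
    t.1.2.1, t.1.2.2.1, t.1.2.2.2] : Matrix (Fin 3) (Fin 3) F).permanent = _
  rw [permanent_fin_three]
  simp only [rowsEquiv, Equiv.coe_fn_mk, Matrix.cons_val', Matrix.cons_val_zero,
    Matrix.cons_val_one, Matrix.head_cons, Matrix.empty_val', Matrix.cons_val_fin_one,
    Matrix.head_fin_const, Matrix.cons_val_two, Matrix.tail_cons, Matrix.of_apply]
  ring

end PermCount

/-- For a finite field `F` with `char F ≠ 2` and `|F| = q`, the number of `3×3`
matrices over `F` with zero permanent is
`|P₃(F)| = q⁹ − (q³−1)(q³−q)(q³−q²) − q²(q−1)⁵`. -/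
theorem card_permanent_zero_three_formula (F : Type) [Field F] [Fintype F]
    (hch : ringChar F ≠ 2) :
    (Nat.card {A : Matrix (Fin 3) (Fin 3) F // A.permanent = 0} : ℤ) =
      (Fintype.card F : ℤ) ^ 9
        - ((Fintype.card F : ℤ) ^ 3 - 1) * ((Fintype.card F : ℤ) ^ 3 - (Fintype.card F : ℤ))
            * ((Fintype.card F : ℤ) ^ 3 - (Fintype.card F : ℤ) ^ 2)
        - (Fintype.card F : ℤ) ^ 2 * ((Fintype.card F : ℤ) - 1) ^ 5 := by
  classical
  have h2 : (2 : F) ≠ 0 := Ring.two_ne_zero hch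
  have hq1 : 1 ≤ Fintype.card F := Fintype.card_pos
  -- Step 1: transfer to a count over triples of rows.
  rw [Nat.card_eq_fintype_card,
    Fintype.card_congr (Equiv.subtypeEquiv
      (p := fun A : Matrix (Fin 3) (Fin 3) F => A.permanent = 0)
      (q := fun t => ((PermCount.rowsEquiv F) t).permanent = 0)
      (PermCount.rowsEquiv F).symm
      (fun A => by simp only [Equiv.apply_symm_apply])),
    Fintype.card_subtype]
  rw [Finset.filter_congr
    (q := fun t : ((F × F × F) × (F × F × F)) × (F × F × F) =>
      (t.1.1.2.1 * t.1.2.2.2 + t.1.1.2.2 * t.1.2.2.1) * t.2.1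
      + (t.1.1.1 * t.1.2.2.2 + t.1.1.2.2 * t.1.2.1) * t.2.2.1
      + (t.1.1.1 * t.1.2.2.1 + t.1.1.2.1 * t.1.2.1) * t.2.2.2 = 0)
    (fun t _ => by rw [PermCount.perm_rowsEquiv])]
  rw [Finset.card_filter, Fintype.sum_prod_type]
  -- Step 2: count the solutions in the first row.
  have hinner : ∀ bc : (F × F × F) × (F × F × F),
      (∑ a : F × F × F, if (bc.1.2.1 * bc.2.2.2 + bc.1.2.2 * bc.2.2.1) * a.1
          + (bc.1.1 * bc.2.2.2 + bc.1.2.2 * bc.2.1) * a.2.1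
          + (bc.1.1 * bc.2.2.1 + bc.1.2.1 * bc.2.1) * a.2.2 = 0 then 1 else 0)
        = if bc.1.2.1 * bc.2.2.2 + bc.1.2.2 * bc.2.2.1 = 0
            ∧ bc.1.1 * bc.2.2.2 + bc.1.2.2 * bc.2.1 = 0
            ∧ bc.1.1 * bc.2.2.1 + bc.1.2.1 * bc.2.1 = 0
          then Fintype.card F ^ 3 else Fintype.card F ^ 2 := by
    intro bc
    rw [← Finset.card_filter]
    exact PermCount.count_linear _ _ _
  rw [Finset.sum_congr rfl (fun bc _ => hinner bc)]
  -- Step 3: the pair count N.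
  set N : ℕ := ((Finset.univ : Finset ((F × F × F) × (F × F × F))).filter fun bc =>
      bc.1.2.1 * bc.2.2.2 + bc.1.2.2 * bc.2.2.1 = 0
      ∧ bc.1.1 * bc.2.2.2 + bc.1.2.2 * bc.2.1 = 0
      ∧ bc.1.1 * bc.2.2.1 + bc.1.2.1 * bc.2.1 = 0).card with hNdef
  set M : ℕ := ((Finset.univ : Finset ((F × F × F) × (F × F × F))).filter fun bc =>
      ¬(bc.1.2.1 * bc.2.2.2 + bc.1.2.2 * bc.2.2.1 = 0
      ∧ bc.1.1 * bc.2.2.2 + bc.1.2.2 * bc.2.1 = 0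
      ∧ bc.1.1 * bc.2.2.1 + bc.1.2.1 * bc.2.1 = 0)).card with hMdef
  have hsplit : (∑ bc : (F × F × F) × (F × F × F),
      if bc.1.2.1 * bc.2.2.2 + bc.1.2.2 * bc.2.2.1 = 0
          ∧ bc.1.1 * bc.2.2.2 + bc.1.2.2 * bc.2.1 = 0
          ∧ bc.1.1 * bc.2.2.1 + bc.1.2.1 * bc.2.1 = 0
        then Fintype.card F ^ 3 else Fintype.card F ^ 2)
      = N * Fintype.card F ^ 3 + M * Fintype.card F ^ 2 := by
    rw [Finset.sum_ite, Finset.sum_const, Finset.sum_const, smul_eq_mul, smul_eq_mul,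
      hNdef, hMdef]
  rw [hsplit]
  -- Step 4: N + M = q^6.
  have hNM : N + M = Fintype.card F ^ 6 := by
    rw [hNdef, hMdef, Finset.card_filter_add_card_filter_not, Finset.card_univ]
    simp only [Fintype.card_prod]
    ring
  -- Step 5: compute N.
  have hNsum : N = ∑ b : F × F × F,
      ((Finset.univ : Finset (F × F × F)).filter fun c =>
        b.2.1 * c.2.2 + b.2.2 * c.2.1 = 0 ∧ b.1 * c.2.2 + b.2.2 * c.1 = 0
          ∧ b.1 * c.2.1 + b.2.1 * c.1 = 0).card := by
    rw [hNdef, Finset.card_filter, Fintype.sum_prod_type]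
    exact Finset.sum_congr rfl (fun b _ => (Finset.card_filter _ _).symm)
  have hNsum2 : N = ∑ b : F × F × F,
      (if b.1 = 0 ∧ b.2.1 = 0 ∧ b.2.2 = 0 then Fintype.card F ^ 3
        else if b.1 ≠ 0 ∧ b.2.1 ≠ 0 ∧ b.2.2 ≠ 0 then 1 else Fintype.card F) :=
    hNsum.trans (Finset.sum_congr rfl (fun b _ => PermCount.count_K h2 b.1 b.2.1 b.2.2))
  have hNval : (N : ℤ) = (Fintype.card F : ℤ) ^ 4 + (Fintype.card F : ℤ) ^ 3
      - (Fintype.card F : ℤ) - ((Fintype.card F : ℤ) - 1) ^ 4 := by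
    have hcast : (N : ℤ) = ∑ b : F × F × F,
        ((Fintype.card F : ℤ)
          + (if b.1 = 0 ∧ b.2.1 = 0 ∧ b.2.2 = 0
              then (Fintype.card F : ℤ) ^ 3 - (Fintype.card F : ℤ) else 0)
          + (if b.1 ≠ 0 ∧ b.2.1 ≠ 0 ∧ b.2.2 ≠ 0
              then 1 - (Fintype.card F : ℤ) else 0)) := by
      rw [hNsum2]
      push_cast
      refine Finset.sum_congr rfl (fun b _ => ?_)
      split_ifs with hP hQ hQ
      · exact absurd hP.1 hQ.1
      · ring
      · ring
      · ring
    rw [hcast, Finset.sum_add_distrib, Finset.sum_add_distrib, Finset.sum_const,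
      ← Finset.sum_filter, ← Finset.sum_filter, Finset.sum_const, Finset.sum_const,
      PermCount.card_point, PermCount.card_nonzero_triple, Finset.card_univ,
      PermCount.card_triple]
    have hc : ((Fintype.card F - 1 : ℕ) : ℤ) = (Fintype.card F : ℤ) - 1 := by
      push_cast [Nat.cast_sub hq1]; ring
    simp only [nsmul_eq_mul, one_smul, Nat.cast_mul, Nat.cast_pow, hc]
    push_cast
    ring
  -- Step 6: conclude.
  have hM : (M : ℤ) = (Fintype.card F : ℤ) ^ 6 - (N : ℤ) := by
    have := congrArg (Nat.cast : ℕ → ℤ) hNM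
    push_cast at this
    linarith
  push_cast
  rw [hM, hNval]
  ring
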